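/- Let f₀ : Γ(E₀') → Γ(E₀) be the C^∞(ℝ²)-linear map determined by f₀(Y₁¹) = X₁¹, f₀(Y₂²) = X₂², f₀(𝒴₁) = 𝒳₁, f₀(𝒴₂) = 𝒳₂. Then f₀ is a morphism of almost Lie algebroids over the identity of ℝ²: ρ(f₀(U)) = ρ'(U) and f₀([U,V]_{E₀'}) = [f₀(U), f₀(V)]_{E₀} for all sections U, V of E₀'. -/

import Mathlib

noncomputable section

set_option maxHeartbeats 1000000
set_option synthInstance.maxHeartbeats 400000

open Matrix

/-- The ℝ-algebra of smooth (C^∞) functions on ℝ². -/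
def Sm : Subalgebra ℝ ((ℝ × ℝ) → ℝ) where
  carrier := {f | ContDiff ℝ (⊤ : ℕ∞) f}
  mul_mem' := fun {a b} (hf : ContDiff ℝ (⊤ : ℕ∞) a) (hg : ContDiff ℝ (⊤ : ℕ∞) b) => hf.mul hg
  add_mem' := fun {a b} (hf : ContDiff ℝ (⊤ : ℕ∞) a) (hg : ContDiff ℝ (⊤ : ℕ∞) b) => hf.add hg
  algebraMap_mem' r :=
    show ContDiff ℝ (⊤ : ℕ∞) (algebraMap ℝ ((ℝ × ℝ) → ℝ) r) from contDiff_const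

/-- Smooth functions on the plane. -/
abbrev S : Type := Sm

lemma mem_Sm_iff {f : (ℝ × ℝ) → ℝ} : f ∈ Sm ↔ ContDiff ℝ (⊤ : ℕ∞) f := by
  rw [Sm]; rfl

lemma smooth_coe (f : S) : ContDiff ℝ (⊤ : ℕ∞) (f : (ℝ × ℝ) → ℝ) := mem_Sm_iff.mp f.2

/-- Sections of the trivial bundle `ℝ² × M₂(ℝ)`, as 2×2 matrices of smooth functions. -/
abbrev E₀ : Type := Matrix (Fin 2) (Fin 2) S

/-- The section `X_j^i`: the constant elementary matrix with 1 in entry (i,j). -/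
def sb (i j : Fin 2) : E₀ := Matrix.single i j 1

/-- First coordinate function. -/
def x₁ : S := ⟨fun p => p.1, mem_Sm_iff.mpr contDiff_fst⟩
/-- Second coordinate function. -/
def x₂ : S := ⟨fun p => p.2, mem_Sm_iff.mpr contDiff_snd⟩
/-- Coordinates. -/
def xc : Fin 2 → S := ![x₁, x₂]

/-- Directional derivative of a smooth function, in direction `v`. -/
def pdAux (v : ℝ × ℝ) (f : S) : S :=
  ⟨fun p => fderiv ℝ (f : (ℝ × ℝ) → ℝ) p v,
    mem_Sm_iff.mpr (((smooth_coe f).fderiv_right (le_refl _)).clm_apply contDiff_const)⟩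

/-- The vector field (derivation) `∂/∂v` on `ℝ²`. -/
def pd (v : ℝ × ℝ) : Derivation ℝ S S where
  toFun := pdAux v
  map_add' f g := by
    ext p
    have hf : DifferentiableAt ℝ (f : (ℝ × ℝ) → ℝ) p :=
      ((smooth_coe f).differentiable (by simp)).differentiableAt
    have hg : DifferentiableAt ℝ (g : (ℝ × ℝ) → ℝ) p :=
      ((smooth_coe g).differentiable (by simp)).differentiableAt
    have h1 : ((f + g : S) : (ℝ × ℝ) → ℝ) = fun q => (f : (ℝ × ℝ) → ℝ) q + (g : (ℝ × ℝ) → ℝ) q := rfl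
    simp only [pdAux, h1, AddMemClass.coe_add, Pi.add_apply]
    rw [fderiv_fun_add hf hg]
    simp
  map_smul' c f := by
    ext p
    have h1 : ((c • f : S) : (ℝ × ℝ) → ℝ) = fun q => c * (f : (ℝ × ℝ) → ℝ) q := rfl
    have hf : DifferentiableAt ℝ (f : (ℝ × ℝ) → ℝ) p :=
      ((smooth_coe f).differentiable (by simp)).differentiableAt
    simp only [pdAux]
    rw [h1, fderiv_const_mul hf]
    simp
  map_one_eq_zero' := by
    ext p
    have h1 : ((1 : S) : (ℝ × ℝ) → ℝ) = fun _ => (1 : ℝ) := rfl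
    have h2 : fderiv ℝ (1 : (ℝ × ℝ) → ℝ) p = 0 := fderiv_const_apply 1
    simp [pdAux, h1, h2]
  leibniz' f g := by
    ext p
    have hf : DifferentiableAt ℝ (f : (ℝ × ℝ) → ℝ) p :=
      ((smooth_coe f).differentiable (by simp)).differentiableAt
    have hg : DifferentiableAt ℝ (g : (ℝ × ℝ) → ℝ) p :=
      ((smooth_coe g).differentiable (by simp)).differentiableAt
    have h1 : ((f * g : S) : (ℝ × ℝ) → ℝ) = fun q => (f : (ℝ × ℝ) → ℝ) q * (g : (ℝ × ℝ) → ℝ) q := rfl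
    simp [pdAux, h1, fderiv_fun_mul hf hg]
    try ring

/-- Standard basis vectors of ℝ². -/
def ev : Fin 2 → ℝ × ℝ := ![(1, 0), (0, 1)]

/-- The anchor `ρ` of `E₀`: `ρ(X_j^i) = (x^i)² ∂/∂x^j`, extended `C^∞(ℝ²)`-linearly. -/
def anchor (X : E₀) : Derivation ℝ S S :=
  ∑ i : Fin 2, ∑ j : Fin 2, (X i j * xc i ^ 2) • pd (ev j)

/-- The section `𝒳₁ = (x²)² X₁¹ − (x¹)² X₁²`. -/
def 𝓧₁ : E₀ := x₂ ^ 2 • sb 0 0 - x₁ ^ 2 • sb 1 0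
/-- The section `𝒳₂ = (x²)² X₂¹ − (x¹)² X₂²`. -/
def 𝓧₂ : E₀ := x₂ ^ 2 • sb 0 1 - x₁ ^ 2 • sb 1 1

/-- The almost Lie bracket axioms for `(E₀, ρ)`, together with the defining values
`[X_j^i, X_l^k] = 2x^k δ_j^k X_l^i − 2x^i δ_l^i X_j^k` on the generators: ℝ-bilinearity,
skew-symmetry, the Leibniz rule, and the values on generators. -/
def IsBracket (L : E₀ → E₀ → E₀) : Prop :=
  (∀ X X' Y, L (X + X') Y = L X Y + L X' Y) ∧
  (∀ X Y Y', L X (Y + Y') = L X Y + L X Y') ∧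
  (∀ (c : ℝ) (X Y : E₀), L (c • X) Y = c • L X Y) ∧
  (∀ (c : ℝ) (X Y : E₀), L X (c • Y) = c • L X Y) ∧
  (∀ X Y, L Y X = - L X Y) ∧
  (∀ (f : S) (X Y : E₀), L X (f • Y) = anchor X f • Y + f • L X Y) ∧
  (∀ i j k l, L (sb i j) (sb k l) =
    (if j = k then (2 : S) * xc k else 0) • sb i l
      - (if l = i then (2 : S) * xc i else 0) • sb k j)


/-- Sections of the trivial bundle `ℝ² × ℝ⁴`. -/
abbrev E₀' : Type := Fin 4 → S

/-- The generator `Y₁¹`. -/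
def Y₁₁ : E₀' := Pi.single 0 1
/-- The generator `Y₂²`. -/
def Y₂₂ : E₀' := Pi.single 1 1
/-- The generator `𝒴₁`. -/
def 𝓨₁ : E₀' := Pi.single 2 1
/-- The generator `𝒴₂`. -/
def 𝓨₂ : E₀' := Pi.single 3 1

/-- The anchor `ρ'` of `E₀'`: `ρ'(Y₁¹) = (x¹)² ∂/∂x¹`, `ρ'(Y₂²) = (x²)² ∂/∂x²`,
`ρ'(𝒴₁) = ρ'(𝒴₂) = 0`, extended `C^∞(ℝ²)`-linearly. -/
def anchor' (u : E₀') : Derivation ℝ S S :=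
  (u 0 * x₁ ^ 2) • pd (ev 0) + (u 1 * x₂ ^ 2) • pd (ev 1)

/-- The map `f₀ : Γ(E₀') → Γ(E₀)` with `f₀(Y₁¹) = X₁¹`, `f₀(Y₂²) = X₂²`, `f₀(𝒴₁) = 𝒳₁`,
`f₀(𝒴₂) = 𝒳₂`, extended `C^∞(ℝ²)`-linearly. -/
def f₀ (u : E₀') : E₀ := u 0 • sb 0 0 + u 1 • sb 1 1 + u 2 • 𝓧₁ + u 3 • 𝓧₂

lemma pd_xc (j i : Fin 2) : pd (ev j) (xc i) = if i = j then 1 else 0 := by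
  fin_cases i <;> fin_cases j <;>
  · ext p
    show fderiv ℝ _ p _ = _
    simp [xc, x₁, x₂, ev]
    norm_num [fderiv_fst, fderiv_snd]
lemma anchor_apply (X : E₀) (f : S) :
    anchor X f = ∑ i : Fin 2, ∑ j : Fin 2, (X i j * xc i ^ 2) * pd (ev j) f := by
  simp [anchor]

lemma anchor_sb (i j : Fin 2) (f : S) : anchor (sb i j) f = xc i ^ 2 * pd (ev j) f := by
  rw [anchor_apply]
  fin_cases i <;> fin_cases j <;>
    simp [sb, Fin.sum_univ_two, Matrix.single, Matrix.of_apply]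
lemma pd_sq (j i : Fin 2) : pd (ev j) (xc i ^ 2) = if i = j then 2 * xc i else 0 := by
  rw [pow_two, Derivation.leibniz, pd_xc]
  split <;> simp [smul_eq_mul] <;> ring

lemma f₀_apply (u : E₀') :
    f₀ u = Matrix.of ![![u 0 + u 2 * x₂ ^ 2, u 3 * x₂ ^ 2],
                       ![-(u 2 * x₁ ^ 2), u 1 - u 3 * x₁ ^ 2]] := by
  ext i j
  fin_cases i <;> fin_cases j <;>
    simp [f₀, 𝓧₁, 𝓧₂, sb, Matrix.single, smul_eq_mul, mul_comm] <;> ring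

lemma anchor'_apply (u : E₀') (f : S) :
    anchor' u f = u 0 * x₁ ^ 2 * pd (ev 0) f + u 1 * x₂ ^ 2 * pd (ev 1) f := by
  simp [anchor']

lemma anchor_f₀ (u : E₀') : anchor (f₀ u) = anchor' u := by
  ext f
  rw [anchor_apply, anchor'_apply, f₀_apply]
  simp only [Fin.sum_univ_two, xc, Matrix.of_apply, Matrix.cons_val', Matrix.cons_val_zero,
    Matrix.cons_val_one, Matrix.head_cons, Matrix.empty_val', Matrix.cons_val_fin_one,
    Matrix.head_fin_const]
  ring

lemma sb_apply (i j a b : Fin 2) : sb i j a b = if i = a ∧ j = b then 1 else 0 := by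
  simp [sb, Matrix.single]

lemma xc_zero : xc 0 = x₁ := rfl
lemma xc_one : xc 1 = x₂ := rfl

lemma pd_x₁_0 : pd (ev 0) x₁ = 1 := by simpa [xc] using pd_xc 0 0
lemma pd_x₁_1 : pd (ev 1) x₁ = 0 := by simpa [xc] using pd_xc 1 0
lemma pd_x₂_0 : pd (ev 0) x₂ = 0 := by simpa [xc] using pd_xc 0 1
lemma pd_x₂_1 : pd (ev 1) x₂ = 1 := by simpa [xc] using pd_xc 1 1

lemma pd_x₁sq_0 : pd (ev 0) (x₁ ^ 2) = 2 * x₁ := by simpa [xc] using pd_sq 0 0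
lemma pd_x₁sq_1 : pd (ev 1) (x₁ ^ 2) = 0 := by simpa [xc] using pd_sq 1 0
lemma pd_x₂sq_0 : pd (ev 0) (x₂ ^ 2) = 0 := by simpa [xc] using pd_sq 0 1
lemma pd_x₂sq_1 : pd (ev 1) (x₂ ^ 2) = 2 * x₂ := by simpa [xc] using pd_sq 1 1

lemma f₀_add (u v : E₀') : f₀ (u + v) = f₀ u + f₀ v := by
  simp only [f₀, Pi.add_apply, add_smul]; abel

lemma f₀_smul (f : S) (u : E₀') : f₀ (f • u) = f • f₀ u := by
  simp only [f₀, Pi.smul_apply, smul_eq_mul]; module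

lemma f₀_zero : f₀ 0 = 0 := by simp [f₀]

lemma f₀_neg (u : E₀') : f₀ (-u) = -f₀ u := by
  simp only [f₀, Pi.neg_apply]; module

lemma f₀_sub (u v : E₀') : f₀ (u - v) = f₀ u - f₀ v := by
  rw [sub_eq_add_neg, f₀_add, f₀_neg, sub_eq_add_neg]

lemma f₀_Y₁₁ : f₀ Y₁₁ = sb 0 0 := by
  simp [f₀, Y₁₁, Pi.single_apply]

lemma f₀_Y₂₂ : f₀ Y₂₂ = sb 1 1 := by
  simp [f₀, Y₂₂, Pi.single_apply]

lemma f₀_𝓨₁ : f₀ 𝓨₁ = 𝓧₁ := by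
  simp [f₀, 𝓨₁, Pi.single_apply]

lemma f₀_𝓨₂ : f₀ 𝓨₂ = 𝓧₂ := by
  simp [f₀, 𝓨₂, Pi.single_apply]

lemma hdec (u : E₀') : u = u 0 • Y₁₁ + u 1 • Y₂₂ + u 2 • 𝓨₁ + u 3 • 𝓨₂ := by
  ext k
  fin_cases k <;>
    simp [Y₁₁, Y₂₂, 𝓨₁, 𝓨₂, Pi.single_apply, smul_eq_mul]

lemma Y₁₁_0 : Y₁₁ 0 = 1 := by simp [Y₁₁]
lemma Y₁₁_1 : Y₁₁ 1 = 0 := by simp [Y₁₁]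
lemma Y₂₂_0 : Y₂₂ 0 = 0 := by simp [Y₂₂]
lemma Y₂₂_1 : Y₂₂ 1 = 1 := by simp [Y₂₂]
lemma 𝓨₁_0 : 𝓨₁ 0 = 0 := by simp [𝓨₁]
lemma 𝓨₁_1 : 𝓨₁ 1 = 0 := by simp [𝓨₁]
lemma 𝓨₂_0 : 𝓨₂ 0 = 0 := by simp [𝓨₂]
lemma 𝓨₂_1 : 𝓨₂ 1 = 0 := by simp [𝓨₂]

lemma anchor_addD (X Y : E₀) (f : S) : anchor (X + Y) f = anchor X f + anchor Y f := by
  simp only [anchor_apply, Fin.sum_univ_two, Matrix.add_apply]; ring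

lemma anchor_smulD (g : S) (X : E₀) (f : S) : anchor (g • X) f = g * anchor X f := by
  simp only [anchor_apply, Fin.sum_univ_two, Matrix.smul_apply, smul_eq_mul]; ring

lemma anchor_negD (X : E₀) (f : S) : anchor (-X) f = -anchor X f := by
  simp only [anchor_apply, Fin.sum_univ_two, Matrix.neg_apply]; ring

lemma anchor_subD (X Y : E₀) (f : S) : anchor (X - Y) f = anchor X f - anchor Y f := by
  simp only [anchor_apply, Fin.sum_univ_two, Matrix.sub_apply]; ring

lemma anchor'_addD (u v : E₀') (f : S) : anchor' (u + v) f = anchor' u f + anchor' v f := by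
  simp only [anchor'_apply, Pi.add_apply]; ring

lemma anchor'_smulD (g : S) (u : E₀') (f : S) : anchor' (g • u) f = g * anchor' u f := by
  simp only [anchor'_apply, Pi.smul_apply, smul_eq_mul]; ring

lemma anchor'_Y₁₁ (f : S) : anchor' Y₁₁ f = x₁ ^ 2 * pd (ev 0) f := by
  simp [anchor'_apply, Y₁₁_0, Y₁₁_1]

lemma anchor'_Y₂₂ (f : S) : anchor' Y₂₂ f = x₂ ^ 2 * pd (ev 1) f := by
  simp [anchor'_apply, Y₂₂_0, Y₂₂_1]

lemma anchor'_𝓨₁ (f : S) : anchor' 𝓨₁ f = 0 := by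
  simp [anchor'_apply, 𝓨₁_0, 𝓨₁_1]

lemma anchor'_𝓨₂ (f : S) : anchor' 𝓨₂ f = 0 := by
  simp [anchor'_apply, 𝓨₂_0, 𝓨₂_1]

lemma anchor_sb00 (f : S) : anchor (sb 0 0) f = x₁ ^ 2 * pd (ev 0) f := by
  simpa [xc_zero] using anchor_sb 0 0 f

lemma anchor_sb11 (f : S) : anchor (sb 1 1) f = x₂ ^ 2 * pd (ev 1) f := by
  simpa [xc_one] using anchor_sb 1 1 f

lemma anchor_𝓧₁ (f : S) : anchor 𝓧₁ f = 0 := by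
  rw [← f₀_𝓨₁, anchor_f₀, anchor'_𝓨₁]

lemma anchor_𝓧₂ (f : S) : anchor 𝓧₂ f = 0 := by
  rw [← f₀_𝓨₂, anchor_f₀, anchor'_𝓨₂]

section Brackets

variable (L : E₀ → E₀ → E₀)

lemma Lsubr (hLaddr : ∀ X Y Y', L X (Y + Y') = L X Y + L X Y')
    (hLsmulr : ∀ (c : ℝ) (X Y : E₀), L X (c • Y) = c • L X Y)
    (X Y Z : E₀) : L X (Y - Z) = L X Y - L X Z := by
  rw [sub_eq_add_neg, hLaddr, ← neg_one_smul ℝ Z, hLsmulr]; module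

lemma Lsubl (hLaddl : ∀ X X' Y, L (X + X') Y = L X Y + L X' Y)
    (hLsmull : ∀ (c : ℝ) (X Y : E₀), L (c • X) Y = c • L X Y)
    (X Y Z : E₀) : L (Y - Z) X = L Y X - L Z X := by
  rw [sub_eq_add_neg, hLaddl, ← neg_one_smul ℝ Z, hLsmull]; module

variable
  (hLaddr : ∀ X Y Y', L X (Y + Y') = L X Y + L X Y')
  (hLsmulr : ∀ (c : ℝ) (X Y : E₀), L X (c • Y) = c • L X Y)
  (hLleib : ∀ (f : S) (X Y : E₀), L X (f • Y) = anchor X f • Y + f • L X Y)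
  (hLgen : ∀ i j k l, L (sb i j) (sb k l) =
    (if j = k then (2 : S) * xc k else 0) • sb i l
      - (if l = i then (2 : S) * xc i else 0) • sb k j)

include hLaddr hLsmulr hLleib hLgen

lemma LZ02 : L (sb 0 0) 𝓧₁ = 0 := by
  rw [show 𝓧₁ = x₂ ^ 2 • sb 0 0 - x₁ ^ 2 • sb 1 0 from rfl,
    Lsubr L hLaddr hLsmulr, hLleib, hLleib, hLgen, hLgen, anchor_sb, anchor_sb,
    xc_zero, pd_x₂sq_0, pd_x₁sq_0]
  simp [xc_zero]
  module

lemma LZ03 : L (sb 0 0) 𝓧₂ = ((2 : S) * x₁) • 𝓧₂ := by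
  rw [show 𝓧₂ = x₂ ^ 2 • sb 0 1 - x₁ ^ 2 • sb 1 1 from rfl,
    Lsubr L hLaddr hLsmulr, hLleib, hLleib, hLgen, hLgen, anchor_sb, anchor_sb,
    xc_zero, pd_x₂sq_0, pd_x₁sq_0]
  simp [xc_zero, xc_one]
  module

lemma LZ12 : L (sb 1 1) 𝓧₁ = ((2 : S) * x₂) • 𝓧₁ := by
  rw [show 𝓧₁ = x₂ ^ 2 • sb 0 0 - x₁ ^ 2 • sb 1 0 from rfl,
    Lsubr L hLaddr hLsmulr, hLleib, hLleib, hLgen, hLgen, anchor_sb, anchor_sb,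
    xc_one, pd_x₂sq_1, pd_x₁sq_1]
  simp [xc_zero, xc_one]
  module

lemma LZ13 : L (sb 1 1) 𝓧₂ = 0 := by
  rw [show 𝓧₂ = x₂ ^ 2 • sb 0 1 - x₁ ^ 2 • sb 1 1 from rfl,
    Lsubr L hLaddr hLsmulr, hLleib, hLleib, hLgen, hLgen, anchor_sb, anchor_sb,
    xc_one, pd_x₂sq_1, pd_x₁sq_1]
  simp [xc_zero, xc_one]
  module

lemma LZ10X2 : L (sb 1 0) 𝓧₂ = -(((2 : S) * x₂) • 𝓧₁) := by
  rw [show 𝓧₂ = x₂ ^ 2 • sb 0 1 - x₁ ^ 2 • sb 1 1 from rfl,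
    Lsubr L hLaddr hLsmulr, hLleib, hLleib, hLgen, hLgen, anchor_sb, anchor_sb,
    xc_one, pd_x₂sq_0, pd_x₁sq_0]
  simp [xc_zero, xc_one, 𝓧₁]
  module

lemma LZ23
    (hLaddl : ∀ X X' Y, L (X + X') Y = L X Y + L X' Y)
    (hLsmull : ∀ (c : ℝ) (X Y : E₀), L (c • X) Y = c • L X Y)
    (hLleft : ∀ (f : S) (X Y : E₀), L (f • X) Y = f • L X Y - anchor Y f • X) :
    L 𝓧₁ 𝓧₂ = ((2 : S) * x₁ ^ 2 * x₂) • 𝓧₁ + ((2 : S) * x₁ * x₂ ^ 2) • 𝓧₂ := by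
  conv_lhs => rw [show 𝓧₁ = x₂ ^ 2 • sb 0 0 - x₁ ^ 2 • sb 1 0 from rfl]
  rw [Lsubl L hLaddl hLsmull, hLleft, hLleft,
    LZ03 L hLaddr hLsmulr hLleib hLgen, LZ10X2 L hLaddr hLsmulr hLleib hLgen,
    anchor_𝓧₂, anchor_𝓧₂]
  simp only [zero_smul, sub_zero, smul_neg]
  module

end Brackets

set_option maxHeartbeats 4000000 in
lemma mainaux (L : E₀ → E₀ → E₀) (L'' : E₀' → E₀' → E₀')
    (haddl : ∀ u u' v, L'' (u + u') v = L'' u v + L'' u' v)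
    (haddr : ∀ u v v', L'' u (v + v') = L'' u v + L'' u v')
    (hleib : ∀ (f : S) (u v : E₀'), L'' u (f • v) = anchor' u f • v + f • L'' u v)
    (hleft'' : ∀ (f : S) (u v : E₀'), L'' (f • u) v = f • L'' u v - anchor' v f • u)
    (hgen1 : L'' Y₁₁ Y₂₂ = 0)
    (hgen2 : L'' Y₁₁ 𝓨₁ = 0)
    (hgen3 : L'' Y₂₂ 𝓨₂ = 0)
    (hgen4 : L'' Y₁₁ 𝓨₂ = ((2 : S) * x₁) • 𝓨₂)
    (hgen5 : L'' Y₂₂ 𝓨₁ = ((2 : S) * x₂) • 𝓨₁)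
    (hgen6 : L'' 𝓨₁ 𝓨₂ = ((2 : S) * x₁ ^ 2 * x₂) • 𝓨₁ + ((2 : S) * x₁ * x₂ ^ 2) • 𝓨₂)
    (hgen1r : L'' Y₂₂ Y₁₁ = 0)
    (hgen2r : L'' 𝓨₁ Y₁₁ = 0)
    (hgen3r : L'' 𝓨₂ Y₂₂ = 0)
    (hgen4r : L'' 𝓨₂ Y₁₁ = -(((2 : S) * x₁) • 𝓨₂))
    (hgen5r : L'' 𝓨₁ Y₂₂ = -(((2 : S) * x₂) • 𝓨₁))
    (hgen6r : L'' 𝓨₂ 𝓨₁ = -(((2 : S) * x₁ ^ 2 * x₂) • 𝓨₁ + ((2 : S) * x₁ * x₂ ^ 2) • 𝓨₂))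
    (hs0 : L'' Y₁₁ Y₁₁ = 0) (hs1 : L'' Y₂₂ Y₂₂ = 0) (hs2 : L'' 𝓨₁ 𝓨₁ = 0) (hs3 : L'' 𝓨₂ 𝓨₂ = 0)
    (hLaddl : ∀ X X' Y, L (X + X') Y = L X Y + L X' Y)
    (hLaddr : ∀ X Y Y', L X (Y + Y') = L X Y + L X Y')
    (hLleib : ∀ (f : S) (X Y : E₀), L X (f • Y) = anchor X f • Y + f • L X Y)
    (hLleft : ∀ (f : S) (X Y : E₀), L (f • X) Y = f • L X Y - anchor Y f • X)
    (hZ1 : L (sb 0 0) (sb 1 1) = 0)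
    (hZ2 : L (sb 0 0) 𝓧₁ = 0)
    (hZ3 : L (sb 1 1) 𝓧₂ = 0)
    (hZ4 : L (sb 0 0) 𝓧₂ = ((2 : S) * x₁) • 𝓧₂)
    (hZ5 : L (sb 1 1) 𝓧₁ = ((2 : S) * x₂) • 𝓧₁)
    (hZ6 : L 𝓧₁ 𝓧₂ = ((2 : S) * x₁ ^ 2 * x₂) • 𝓧₁ + ((2 : S) * x₁ * x₂ ^ 2) • 𝓧₂)
    (hZ1r : L (sb 1 1) (sb 0 0) = 0)
    (hZ2r : L 𝓧₁ (sb 0 0) = 0)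
    (hZ3r : L 𝓧₂ (sb 1 1) = 0)
    (hZ4r : L 𝓧₂ (sb 0 0) = -(((2 : S) * x₁) • 𝓧₂))
    (hZ5r : L 𝓧₁ (sb 1 1) = -(((2 : S) * x₂) • 𝓧₁))
    (hZ6r : L 𝓧₂ 𝓧₁ = -(((2 : S) * x₁ ^ 2 * x₂) • 𝓧₁ + ((2 : S) * x₁ * x₂ ^ 2) • 𝓧₂))
    (hZs0 : L (sb 0 0) (sb 0 0) = 0) (hZs1 : L (sb 1 1) (sb 1 1) = 0)
    (hZs2 : L 𝓧₁ 𝓧₁ = 0) (hZs3 : L 𝓧₂ 𝓧₂ = 0)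
    (a b c d e f g h : S) :
    f₀ (L'' (a•Y₁₁+b•Y₂₂+c•𝓨₁+d•𝓨₂) (e•Y₁₁+f•Y₂₂+g•𝓨₁+h•𝓨₂)) =
      L (f₀ (a•Y₁₁+b•Y₂₂+c•𝓨₁+d•𝓨₂)) (f₀ (e•Y₁₁+f•Y₂₂+g•𝓨₁+h•𝓨₂)) := by
  simp only [f₀_add, f₀_smul, f₀_Y₁₁, f₀_Y₂₂, f₀_𝓨₁, f₀_𝓨₂,
    haddl, haddr, hleib, hleft'',
    hLaddl, hLaddr, hLleib, hLleft,
    hgen1, hgen2, hgen3, hgen4, hgen5, hgen6,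
    hgen1r, hgen2r, hgen3r, hgen4r, hgen5r, hgen6r, hs0, hs1, hs2, hs3,
    hZ1, hZ2, hZ3, hZ4, hZ5, hZ6, hZ1r, hZ2r, hZ3r, hZ4r, hZ5r, hZ6r,
    hZs0, hZs1, hZs2, hZs3,
    anchor_addD, anchor_smulD, anchor_negD, anchor_subD,
    anchor'_addD, anchor'_smulD,
    anchor'_Y₁₁, anchor'_Y₂₂, anchor'_𝓨₁, anchor'_𝓨₂,
    anchor_sb00, anchor_sb11, anchor_𝓧₁, anchor_𝓧₂,
    f₀_zero, f₀_neg, f₀_sub,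
    smul_add, smul_neg, smul_zero, zero_smul, smul_sub,
    add_zero, zero_add, mul_zero, zero_mul, neg_zero, sub_zero]

/-- `f₀` is a morphism of almost Lie algebroids over the identity of `ℝ²`:
it intertwines the anchors and the brackets.  Here `L` is the almost Lie bracket of `E₀`
and `L''` is the almost Lie bracket of `E₀'` (defined on generators and extended by
ℝ-bilinearity, skew-symmetry and the Leibniz rule w.r.t. `ρ'`). -/
theorem statement9 (L : E₀ → E₀ → E₀) (hL : IsBracket L)
    (L'' : E₀' → E₀' → E₀')
    (haddl : ∀ u u' v, L'' (u + u') v = L'' u v + L'' u' v)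
    (haddr : ∀ u v v', L'' u (v + v') = L'' u v + L'' u v')
    (hsmull : ∀ (c : ℝ) (u v : E₀'), L'' (c • u) v = c • L'' u v)
    (hsmulr : ∀ (c : ℝ) (u v : E₀'), L'' u (c • v) = c • L'' u v)
    (hskew : ∀ u v, L'' v u = - L'' u v)
    (hleib : ∀ (f : S) (u v : E₀'), L'' u (f • v) = anchor' u f • v + f • L'' u v)
    (hgen1 : L'' Y₁₁ Y₂₂ = 0)
    (hgen2 : L'' Y₁₁ 𝓨₁ = 0)
    (hgen3 : L'' Y₂₂ 𝓨₂ = 0)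
    (hgen4 : L'' Y₁₁ 𝓨₂ = ((2 : S) * x₁) • 𝓨₂)
    (hgen5 : L'' Y₂₂ 𝓨₁ = ((2 : S) * x₂) • 𝓨₁)
    (hgen6 : L'' 𝓨₁ 𝓨₂ = ((2 : S) * x₁ ^ 2 * x₂) • 𝓨₁ + ((2 : S) * x₁ * x₂ ^ 2) • 𝓨₂) :
    (∀ u : E₀', anchor (f₀ u) = anchor' u) ∧
    (∀ u v : E₀', f₀ (L'' u v) = L (f₀ u) (f₀ v)) := by
  obtain ⟨hLaddl, hLaddr, hLsmull, hLsmulr, hLskew, hLleib, hLgen⟩ := hL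
  have hLleft : ∀ (f : S) (X Y : E₀), L (f • X) Y = f • L X Y - anchor Y f • X := by
    intro f X Y
    rw [hLskew Y (f • X), hLleib, hLskew X Y]
    module
  have hleft'' : ∀ (f : S) (u v : E₀'), L'' (f • u) v = f • L'' u v - anchor' v f • u := by
    intro f u v
    rw [hskew v (f • u), hleib, hskew u v]
    module
  have hLself : ∀ X, L X X = 0 := by
    intro X
    have h1 := hLskew X X
    have h2 : (2:ℝ) • L X X = 0 := by rw [two_smul]; nth_rewrite 1 [h1]; abel
    have h3 : L X X = (2:ℝ)⁻¹ • ((2:ℝ) • L X X) := by rw [smul_smul]; norm_num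
    rw [h3, h2, smul_zero]
  have hself : ∀ u, L'' u u = 0 := by
    intro u
    have h1 := hskew u u
    have h2 : (2:ℝ) • L'' u u = 0 := by rw [two_smul]; nth_rewrite 1 [h1]; abel
    have h3 : L'' u u = (2:ℝ)⁻¹ • ((2:ℝ) • L'' u u) := by rw [smul_smul]; norm_num
    rw [h3, h2, smul_zero]
  have hZ1 : L (sb 0 0) (sb 1 1) = 0 := by
    rw [hLgen]; simp
  have hZ2 : L (sb 0 0) 𝓧₁ = 0 := LZ02 L hLaddr hLsmulr hLleib hLgen
  have hZ3 : L (sb 1 1) 𝓧₂ = 0 := LZ13 L hLaddr hLsmulr hLleib hLgen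
  have hZ4 : L (sb 0 0) 𝓧₂ = ((2 : S) * x₁) • 𝓧₂ := LZ03 L hLaddr hLsmulr hLleib hLgen
  have hZ5 : L (sb 1 1) 𝓧₁ = ((2 : S) * x₂) • 𝓧₁ := LZ12 L hLaddr hLsmulr hLleib hLgen
  have hZ6 : L 𝓧₁ 𝓧₂ = ((2 : S) * x₁ ^ 2 * x₂) • 𝓧₁ + ((2 : S) * x₁ * x₂ ^ 2) • 𝓧₂ :=
    LZ23 L hLaddr hLsmulr hLleib hLgen hLaddl hLsmull hLleft
  refine ⟨fun u => anchor_f₀ u, ?_⟩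
  intro u v
  have key := mainaux L L'' haddl haddr hleib hleft''
    hgen1 hgen2 hgen3 hgen4 hgen5 hgen6
    (by rw [hskew, hgen1, neg_zero]) (by rw [hskew, hgen2, neg_zero])
    (by rw [hskew, hgen3, neg_zero]) (by rw [hskew, hgen4])
    (by rw [hskew, hgen5]) (by rw [hskew, hgen6])
    (hself _) (hself _) (hself _) (hself _)
    hLaddl hLaddr hLleib hLleft
    hZ1 hZ2 hZ3 hZ4 hZ5 hZ6
    (by rw [hLskew, hZ1, neg_zero]) (by rw [hLskew, hZ2, neg_zero])
    (by rw [hLskew, hZ3, neg_zero]) (by rw [hLskew, hZ4])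
    (by rw [hLskew, hZ5]) (by rw [hLskew, hZ6])
    (hLself _) (hLself _) (hLself _) (hLself _)
    (u 0) (u 1) (u 2) (u 3) (v 0) (v 1) (v 2) (v 3)
  rw [← hdec u, ← hdec v] at key
  exact key
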